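/- Let n ≥ 1 and let π and t be two elements of the symmetric group S_{2n} on {1,…,2n}, each of which is a product of n disjoint transpositions (equivalently, each is a fixed-point-free involution). Then there exists g ∈ S_{2n} with g² = id and g π g⁻¹ = t. -/

import Mathlib

namespace Stmt3Aux

variable {α : Type*}

section Defs

variable (π t : Equiv.Perm α)

/-- `c = π * t`, the "rotation". -/
def cc : Equiv.Perm α := π * t

/-- Orbit relation of the subgroup generated by `π` and `t`:
every element of that subgroup has the form `c^k` or `t * c^k`. -/
def rel (x y : α) : Prop :=
  (∃ k : ℤ, y = ((cc π t) ^ k) x) ∨ (∃ k : ℤ, y = ((t * (cc π t) ^ k)) x)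

end Defs

section Lemmas

variable {π t : Equiv.Perm α}

local notation "c" => cc π t

lemma pi_inv (hπ : π * π = 1) : π⁻¹ = π := inv_eq_of_mul_eq_one_right hπ
lemma t_inv (ht : t * t = 1) : t⁻¹ = t := inv_eq_of_mul_eq_one_right ht

lemma t_conj (hπ : π * π = 1) (ht : t * t = 1) :
    t * cc π t * t⁻¹ = (cc π t)⁻¹ := by
  rw [cc, mul_inv_rev, t_inv ht, pi_inv hπ]
  calc t * (π * t) * t = t * π * (t * t) := by group
    _ = t * π := by rw [ht, mul_one]

lemma pi_conj (hπ : π * π = 1) (ht : t * t = 1) :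
    π * cc π t * π⁻¹ = (cc π t)⁻¹ := by
  rw [cc, mul_inv_rev, t_inv ht, pi_inv hπ]
  calc π * (π * t) * π = (π * π) * (t * π) := by group
    _ = t * π := by rw [hπ, one_mul]

lemma t_zpow (hπ : π * π = 1) (ht : t * t = 1) (k : ℤ) :
    t * c ^ k = c ^ (-k) * t := by
  have h2 : t * c ^ k * t⁻¹ = c ^ (-k) := by
    rw [← conj_zpow, t_conj hπ ht, zpow_neg, inv_zpow]
  rw [← h2, inv_mul_cancel_right]

lemma pi_zpow (hπ : π * π = 1) (ht : t * t = 1) (k : ℤ) :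
    π * c ^ k = c ^ (-k) * π := by
  have h2 : π * c ^ k * π⁻¹ = c ^ (-k) := by
    rw [← conj_zpow, pi_conj hπ ht, zpow_neg, inv_zpow]
  rw [← h2, inv_mul_cancel_right]

lemma zpow_t (hπ : π * π = 1) (ht : t * t = 1) (k : ℤ) :
    c ^ k * t = t * c ^ (-k) := by
  rw [t_zpow hπ ht, neg_neg]

lemma c_t (ht : t * t = 1) : c * t = π := by
  rw [cc, mul_assoc, ht, mul_one]

/-- All "reflections" `c^k * t` are fixed-point free. -/
lemma refl_free (hπ : π * π = 1) (ht : t * t = 1)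
    (hπfree : ∀ x, π x ≠ x) (htfree : ∀ x, t x ≠ x)
    (k : ℤ) (x : α) : ((c ^ k * t)) x ≠ x := by
  intro hx
  rcases Int.even_or_odd k with ⟨m, hm⟩ | ⟨m, hm⟩
  · have key : c ^ k * t = c ^ m * t * c ^ (-m) := by
      rw [mul_assoc, t_zpow hπ ht, neg_neg, ← mul_assoc, ← zpow_add, hm]
    rw [key] at hx
    have h3 := congrArg (⇑(c ^ (-m))) hx
    simp only [← Equiv.Perm.mul_apply, ← mul_assoc, ← zpow_add, neg_add_cancel,
      zpow_zero, one_mul] at h3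
    exact htfree _ h3
  · have key : c ^ m * π * c ^ (-m) = c ^ k * t := by
      calc c ^ m * π * c ^ (-m) = c ^ m * (π * c ^ (-m)) := by group
        _ = c ^ m * (c ^ m * π) := by rw [pi_zpow hπ ht, neg_neg]
        _ = (c ^ m * c ^ m) * (c * t) := by rw [c_t ht]; group
        _ = (c ^ m * c ^ m * c ^ (1:ℤ)) * t := by rw [zpow_one]; group
        _ = c ^ k * t := by rw [← zpow_add, ← zpow_add]; congr 2; omega
    rw [← key] at hx
    have h3 := congrArg (⇑(c ^ (-m))) hx
    simp only [← Equiv.Perm.mul_apply, ← mul_assoc, ← zpow_add, neg_add_cancel,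
      zpow_zero, one_mul] at h3
    exact hπfree _ h3

lemma refl_sq (hπ : π * π = 1) (ht : t * t = 1) (k : ℤ) :
    (t * c ^ k) * (t * c ^ k) = 1 := by
  calc (t * c ^ k) * (t * c ^ k) = t * (c ^ k * t) * c ^ k := by group
    _ = t * (t * c ^ (-k)) * c ^ k := by rw [zpow_t hπ ht]
    _ = (t * t) * (c ^ (-k) * c ^ k) := by group
    _ = 1 := by rw [ht, ← zpow_add, neg_add_cancel, zpow_zero, mul_one]

lemma rel_equiv (hπ : π * π = 1) (ht : t * t = 1) : Equivalence (rel π t) := by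
  constructor
  · intro x; exact Or.inl ⟨0, by simp⟩
  · rintro x y (⟨k, hk⟩ | ⟨k, hk⟩)
    · exact Or.inl ⟨-k, by rw [hk, ← Equiv.Perm.mul_apply, ← zpow_add,
        neg_add_cancel, zpow_zero, Equiv.Perm.one_apply]⟩
    · refine Or.inr ⟨k, ?_⟩
      rw [hk, ← Equiv.Perm.mul_apply, refl_sq hπ ht, Equiv.Perm.one_apply]
  · rintro x y z (⟨k, hk⟩ | ⟨k, hk⟩) (⟨j, hj⟩ | ⟨j, hj⟩)
    · exact Or.inl ⟨j + k, by rw [hj, hk, ← Equiv.Perm.mul_apply, ← zpow_add]⟩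
    · refine Or.inr ⟨j + k, ?_⟩
      rw [hj, hk, ← Equiv.Perm.mul_apply, mul_assoc, ← zpow_add]
    · refine Or.inr ⟨k - j, ?_⟩
      rw [hj, hk, ← Equiv.Perm.mul_apply]
      congr 1
      calc c ^ j * (t * c ^ k) = (c ^ j * t) * c ^ k := by group
        _ = (t * c ^ (-j)) * c ^ k := by rw [zpow_t hπ ht]
        _ = t * (c ^ (-j) * c ^ k) := by group
        _ = t * c ^ (k - j) := by rw [← zpow_add, neg_add_eq_sub]
    · refine Or.inl ⟨k - j, ?_⟩
      rw [hj, hk, ← Equiv.Perm.mul_apply]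
      congr 1
      calc t * c ^ j * (t * c ^ k) = t * (c ^ j * t) * c ^ k := by group
        _ = t * (t * c ^ (-j)) * c ^ k := by rw [zpow_t hπ ht]
        _ = (t * t) * (c ^ (-j) * c ^ k) := by group
        _ = c ^ (k - j) := by rw [ht, one_mul, ← zpow_add, neg_add_eq_sub]

end Lemmas


section Main

variable {π t : Equiv.Perm α}

local notation "c" => cc π t

def sd (hπ : π * π = 1) (ht : t * t = 1) : Setoid α :=
  ⟨rel π t, rel_equiv hπ ht⟩

noncomputable def rep (hπ : π * π = 1) (ht : t * t = 1) (x : α) : α :=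
  (Quotient.mk (sd hπ ht) x).out

lemma rep_rel (hπ : π * π = 1) (ht : t * t = 1) (x : α) :
    rel π t (rep hπ ht x) x :=
  @Quotient.mk_out α (sd hπ ht) x

lemma rep_eq_of_rel (hπ : π * π = 1) (ht : t * t = 1) {x y : α}
    (h : rel π t x y) : rep hπ ht x = rep hπ ht y :=
  congrArg Quotient.out (Quotient.sound h)

lemma rep_idem (hπ : π * π = 1) (ht : t * t = 1) (x : α) :
    rep hπ ht (rep hπ ht x) = rep hπ ht x :=
  rep_eq_of_rel hπ ht (rep_rel hπ ht x)

lemma rep_zpow (hπ : π * π = 1) (ht : t * t = 1) (k : ℤ) (x : α) :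
    rep hπ ht ((c ^ k) x) = rep hπ ht x :=
  (rep_eq_of_rel hπ ht (Or.inl ⟨k, rfl⟩)).symm

lemma rep_t (hπ : π * π = 1) (ht : t * t = 1) (x : α) :
    rep hπ ht (t x) = rep hπ ht x :=
  (rep_eq_of_rel hπ ht (Or.inr ⟨0, by rw [zpow_zero, mul_one]⟩)).symm

lemma wd_gen (hπ : π * π = 1) (ht : t * t = 1) (a b d : ℤ) (r : α)
    (h : (c ^ a) r = (c ^ b) r) : (c ^ (d + a)) r = (c ^ (d + b)) r := by
  have h2 := congrArg (⇑(c ^ d)) h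
  rwa [← Equiv.Perm.mul_apply, ← Equiv.Perm.mul_apply, ← zpow_add, ← zpow_add] at h2

lemma neg_wd (hπ : π * π = 1) (ht : t * t = 1) (a b : ℤ) (r : α)
    (h : (c ^ a) r = (c ^ b) r) : (c ^ (-a)) r = (c ^ (-b)) r := by
  have h2 := wd_gen hπ ht a b (-a - b) r h
  rw [show -a - b + a = -b by ring, show -a - b + b = -a by ring] at h2
  exact h2.symm

lemma neg_sub_one_wd (hπ : π * π = 1) (ht : t * t = 1) (a b : ℤ) (r : α)
    (h : (c ^ a) r = (c ^ b) r) : (c ^ (-a - 1)) r = (c ^ (-b - 1)) r := by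
  have h2 := wd_gen hπ ht a b (-a - b - 1) r h
  rw [show -a - b - 1 + a = -b - 1 by ring, show -a - b - 1 + b = -a - 1 by ring] at h2
  exact h2.symm

lemma even_odd_ne (hπ : π * π = 1) (ht : t * t = 1)
    (hπfree : ∀ x, π x ≠ x) (htfree : ∀ x, t x ≠ x)
    (k m : ℤ) (r : α) : (c ^ k) r ≠ t ((c ^ m) r) := by
  intro h
  have e : c ^ (-k - m) * t = c ^ (-k) * t * c ^ m := by
    rw [mul_assoc, t_zpow hπ ht, ← mul_assoc, ← zpow_add]
    congr 1
  apply refl_free hπ ht hπfree htfree (-k - m) r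
  rw [e]
  calc (c ^ (-k) * t * c ^ m) r = (c ^ (-k)) (t ((c ^ m) r)) := rfl
    _ = (c ^ (-k)) ((c ^ k) r) := by rw [h]
    _ = r := by rw [zpow_neg]; exact Equiv.symm_apply_apply _ _

/-- Coverage: every point is even (`c^k r`) or odd (`t (c^k r)`) w.r.t. its
orbit representative `r`. -/
lemma even_or_odd (hπ : π * π = 1) (ht : t * t = 1) (x : α) :
    (∃ k : ℤ, x = (c ^ k) (rep hπ ht x)) ∨
      (∃ k : ℤ, x = t ((c ^ k) (rep hπ ht x))) := by
  rcases rep_rel hπ ht x with ⟨k, hk⟩ | ⟨k, hk⟩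
  · exact Or.inl ⟨k, hk⟩
  · exact Or.inr ⟨k, by rw [Equiv.Perm.mul_apply] at hk; exact hk⟩

open Classical in
/-- The reflection `x_j ↦ x_{-j}` on each alternating orbit. -/
noncomputable def ff (hπ : π * π = 1) (ht : t * t = 1) (x : α) : α :=
  if h : ∃ k : ℤ, x = (c ^ k) (rep hπ ht x) then
    (c ^ (-h.choose)) (rep hπ ht x)
  else if h2 : ∃ k : ℤ, x = t ((c ^ k) (rep hπ ht x)) then
    t ((c ^ (-h2.choose - 1)) (rep hπ ht x))
  else x

lemma ff_even (hπ : π * π = 1) (ht : t * t = 1) (x : α) (k : ℤ)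
    (h : x = (c ^ k) (rep hπ ht x)) :
    ff hπ ht x = (c ^ (-k)) (rep hπ ht x) := by
  have hp : ∃ k : ℤ, x = (c ^ k) (rep hπ ht x) := ⟨k, h⟩
  rw [ff, dif_pos hp]
  exact neg_wd hπ ht _ _ _ (hp.choose_spec.symm.trans h)

lemma ff_odd (hπ : π * π = 1) (ht : t * t = 1)
    (hπfree : ∀ x, π x ≠ x) (htfree : ∀ x, t x ≠ x) (x : α) (m : ℤ)
    (h : x = t ((c ^ m) (rep hπ ht x))) :
    ff hπ ht x = t ((c ^ (-m - 1)) (rep hπ ht x)) := by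
  have hp : ∃ k : ℤ, x = t ((c ^ k) (rep hπ ht x)) := ⟨m, h⟩
  have hne : ¬∃ k : ℤ, x = (c ^ k) (rep hπ ht x) := by
    rintro ⟨k, hk⟩
    exact even_odd_ne hπ ht hπfree htfree k m _ (hk.symm.trans h)
  rw [ff, dif_neg hne, dif_pos hp]
  have h3 : (c ^ hp.choose) (rep hπ ht x) = (c ^ m) (rep hπ ht x) :=
    t.injective (hp.choose_spec.symm.trans h)
  exact congrArg t (neg_sub_one_wd hπ ht _ _ _ h3)

lemma ff_invol (hπ : π * π = 1) (ht : t * t = 1)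
    (hπfree : ∀ x, π x ≠ x) (htfree : ∀ x, t x ≠ x) :
    Function.Involutive (ff hπ ht) := by
  intro x
  rcases even_or_odd hπ ht x with ⟨k, h⟩ | ⟨m, h⟩
  · rw [ff_even hπ ht x k h]
    have hr : rep hπ ht ((c ^ (-k)) (rep hπ ht x)) = rep hπ ht x := by
      rw [rep_zpow hπ ht, rep_idem hπ ht]
    rw [ff_even hπ ht _ (-k) (by rw [hr]), hr, neg_neg, ← h]
  · rw [ff_odd hπ ht hπfree htfree x m h]
    have hr : rep hπ ht (t ((c ^ (-m - 1)) (rep hπ ht x))) = rep hπ ht x := by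
      rw [rep_t hπ ht, rep_zpow hπ ht, rep_idem hπ ht]
    rw [ff_odd hπ ht hπfree htfree _ (-m - 1) (by rw [hr]), hr,
      show -(-m - 1) - 1 = m by ring, ← h]

lemma ff_conj (hπ : π * π = 1) (ht : t * t = 1)
    (hπfree : ∀ x, π x ≠ x) (htfree : ∀ x, t x ≠ x) (x : α) :
    ff hπ ht (π (ff hπ ht x)) = t x := by
  rcases even_or_odd hπ ht x with ⟨k, h⟩ | ⟨m, h⟩
  · rw [ff_even hπ ht x k h]
    -- π (c^{-k} r) = t (c^{-k-1} r)
    have e2 : c ^ k * π = t * c ^ (-k - 1) := by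
      calc c ^ k * π = c ^ k * (c * t) := by rw [c_t ht]
        _ = (c ^ k * c ^ (1:ℤ)) * t := by rw [zpow_one]; group
        _ = c ^ (k + 1) * t := by rw [← zpow_add]
        _ = t * c ^ (-(k + 1)) := zpow_t hπ ht _
        _ = t * c ^ (-k - 1) := by congr 1; ring
    have e : π ((c ^ (-k)) (rep hπ ht x)) = t ((c ^ (-k - 1)) (rep hπ ht x)) := by
      rw [← Equiv.Perm.mul_apply, ← Equiv.Perm.mul_apply, pi_zpow hπ ht, neg_neg, e2]
    rw [e]
    have hr : rep hπ ht (t ((c ^ (-k - 1)) (rep hπ ht x))) = rep hπ ht x := by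
      rw [rep_t hπ ht, rep_zpow hπ ht, rep_idem hπ ht]
    rw [ff_odd hπ ht hπfree htfree _ (-k - 1) (by rw [hr]), hr,
      show -(-k - 1) - 1 = k by ring]
    exact congrArg t h.symm
  · rw [ff_odd hπ ht hπfree htfree x m h]
    have e : π (t ((c ^ (-m - 1)) (rep hπ ht x))) = (c ^ (-m)) (rep hπ ht x) := by
      calc π (t ((c ^ (-m - 1)) (rep hπ ht x)))
          = ((cc π t) * c ^ (-m - 1)) (rep hπ ht x) := rfl
        _ = (c ^ (1 + (-m - 1))) (rep hπ ht x) := by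
            rw [show (cc π t) * c ^ (-m - 1) = c ^ (1 + (-m - 1)) from by
              rw [zpow_add, zpow_one]]
        _ = (c ^ (-m)) (rep hπ ht x) := by norm_num
    rw [e]
    have hr : rep hπ ht ((c ^ (-m)) (rep hπ ht x)) = rep hπ ht x := by
      rw [rep_zpow hπ ht, rep_idem hπ ht]
    rw [ff_even hπ ht _ (-m) (by rw [hr]), hr, neg_neg]
    calc (c ^ m) (rep hπ ht x) = t (t ((c ^ m) (rep hπ ht x))) := by
          rw [← Equiv.Perm.mul_apply, ht]; rfl
      _ = t x := by rw [← h]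

end Main

end Stmt3Aux

theorem stmt3 (n : ℕ) (hn : 1 ≤ n)
    (π t : Equiv.Perm (Fin (2 * n)))
    (hπ : π * π = 1) (hπfree : ∀ x, π x ≠ x)
    (ht : t * t = 1) (htfree : ∀ x, t x ≠ x) :
    ∃ g : Equiv.Perm (Fin (2 * n)), g * g = 1 ∧ g * π * g⁻¹ = t := by
  have hinv := Stmt3Aux.ff_invol hπ ht hπfree htfree
  refine ⟨Function.Involutive.toPerm _ hinv, ?_, ?_⟩
  · ext x
    rw [Equiv.Perm.mul_apply, Equiv.Perm.one_apply, Function.Involutive.coe_toPerm]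
    exact congrArg Fin.val (hinv x)
  · ext x
    rw [Equiv.Perm.mul_apply, Equiv.Perm.mul_apply, Equiv.Perm.inv_def,
      Function.Involutive.toPerm_symm, Function.Involutive.coe_toPerm]
    exact congrArg Fin.val (Stmt3Aux.ff_conj hπ ht hπfree htfree x)
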